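/- Let F and F̃ be distribution functions of nonnegative random variables with F(0) < 1, let q₀ ≥ 0, and let e : [0,∞) → [0,∞) be nondecreasing, nonnegative and right-continuous with left-hand limits. Then there exists a unique locally bounded Borel function q : [0,∞) → ℝ satisfying, for all t ≥ 0, the fluid equation q(t) = q₀ − max(q₀ − 1, 0)·F(t) − min(q₀, 1)·F̃(t) + e(t) − ∫₀ᵗ e(t−s) dF(s) + ∫₀ᵗ max(q(t−s) − 1, 0) dF(s); this q is right-continuous with left-hand limits and satisfies q(t) ≥ 0 for all t ≥ 0. -/

import Mathlib

open MeasureTheory Filter Set Topology Function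

/-- `B` is the distribution function of a nonnegative random variable:
it vanishes on the negatives and tends to `1` at infinity. -/
def IsNNDistFun (B : StieltjesFunction ℝ) : Prop :=
  (∀ x < (0 : ℝ), B x = 0) ∧ Tendsto B atTop (nhds 1)

/-- `g` is right-continuous with left-hand limits on `[0,∞)`. -/
def RCLLOnNonneg (g : ℝ → ℝ) : Prop :=
  (∀ t ≥ (0 : ℝ), Tendsto g (nhdsWithin t (Set.Ioi t)) (nhds (g t))) ∧
  (∀ t > (0 : ℝ), ∃ L : ℝ, Tendsto g (nhdsWithin t (Set.Iio t)) (nhds L))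

/-- `q` is a locally bounded Borel function on `[0,∞)`. -/
def LocBddBorel (q : ℝ → ℝ) : Prop :=
  Measurable (fun t : Set.Ici (0 : ℝ) => q t) ∧
  ∀ T > (0 : ℝ), ∃ C : ℝ, ∀ t ∈ Set.Icc (0 : ℝ) T, |q t| ≤ C

/-- `q` satisfies the fluid limit equation (2.3). -/
def SolvesFluid (F Ft : StieltjesFunction ℝ) (q₀ : ℝ) (e : ℝ → ℝ) (q : ℝ → ℝ) : Prop :=
  ∀ t ≥ (0 : ℝ),
    q t = q₀ - max (q₀ - 1) 0 * F t - min q₀ 1 * Ft t + e t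
        - (∫ s in Set.Icc (0 : ℝ) t, e (t - s) ∂F.measure)
        + ∫ s in Set.Icc (0 : ℝ) t, max (q (t - s) - 1) 0 ∂F.measure

noncomputable def conv (μ : Measure ℝ) (h : ℝ → ℝ) (t : ℝ) : ℝ :=
  ∫ s in Icc (0:ℝ) t, h (t - s) ∂μ

lemma conv_measurable (μ : Measure ℝ) [SFinite μ] {h : ℝ → ℝ} (hh : Measurable h) :
    Measurable (conv μ h) := by
  have hG : StronglyMeasurable (fun p : ℝ × ℝ =>
      ({q : ℝ × ℝ | q.2 ∈ Icc (0:ℝ) q.1}.indicator (fun q => h (q.1 - q.2))) p) := by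
    apply Measurable.stronglyMeasurable
    apply Measurable.indicator
    · exact (hh.comp (measurable_fst.sub measurable_snd))
    · exact (measurableSet_le measurable_const measurable_snd).inter
        (measurableSet_le measurable_snd measurable_fst)
  have := hG.integral_prod_right' (ν := μ)
  have heq : conv μ h = fun t => ∫ s, ({q : ℝ × ℝ | q.2 ∈ Icc (0:ℝ) q.1}.indicator
      (fun q => h (q.1 - q.2))) (t, s) ∂μ := by
    funext t
    show ∫ s in Icc (0:ℝ) t, h (t - s) ∂μ = _
    rw [← integral_indicator measurableSet_Icc]
    refine integral_congr_ae (ae_of_all _ fun s => ?_)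
    simp only [Set.indicator_apply, mem_Icc, mem_setOf_eq]
  rw [heq]
  exact this.measurable

lemma integrableOn_of_bound (μ : Measure ℝ) [IsFiniteMeasure μ] {f : ℝ → ℝ}
    (hf : Measurable f) {s : Set ℝ} (hs : MeasurableSet s) {C : ℝ}
    (hC : ∀ x ∈ s, |f x| ≤ C) : IntegrableOn f s μ := by
  refine (integrable_const C).mono' hf.aestronglyMeasurable ?_
  refine (ae_restrict_iff' hs).2 (ae_of_all _ fun x hx => ?_)
  simpa [Real.norm_eq_abs] using hC x hx

lemma conv_le {μ : Measure ℝ} [IsFiniteMeasure μ] {h : ℝ → ℝ} (hmeas : Measurable h)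
    {T lam D t : ℝ} (ht : t ∈ Icc (0:ℝ) T) (hD : 0 ≤ D) (hlam : 0 ≤ lam)
    (h0 : ∀ x ∈ Icc (0:ℝ) T, 0 ≤ h x)
    (hbd : ∀ x ∈ Icc (0:ℝ) T, h x ≤ D * Real.exp (lam * x)) :
    conv μ h t ≤ D * Real.exp (lam * t) * ∫ s in Icc (0:ℝ) T, Real.exp (-(lam * s)) ∂μ := by
  obtain ⟨ht0, htT⟩ := ht
  have hsub : ∀ s ∈ Icc (0:ℝ) t, t - s ∈ Icc (0:ℝ) T :=
    fun s hs => ⟨by linarith [hs.2], by linarith [hs.1]⟩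
  have step1 : conv μ h t ≤ ∫ s in Icc (0:ℝ) t, D * Real.exp (lam * (t - s)) ∂μ := by
    refine setIntegral_mono_on ?_ ?_ measurableSet_Icc ?_
    · refine integrableOn_of_bound μ (hmeas.comp (measurable_const.sub measurable_id))
        measurableSet_Icc (C := D * Real.exp (lam * T)) fun s hs => ?_
      have h1 := h0 _ (hsub s hs)
      have h2 := hbd _ (hsub s hs)
      have habs : |(h ∘ fun a => t - id a) s| = h (t - s) := by
        simp only [Function.comp, id]; exact abs_of_nonneg h1
      rw [show |(h ∘ ((fun x => t) - id)) s| = h (t - s) from habs]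
      refine h2.trans (mul_le_mul_of_nonneg_left ?_ hD)
      exact Real.exp_le_exp.2 (mul_le_mul_of_nonneg_left (hsub s hs).2 hlam)
    · refine integrableOn_of_bound μ (by fun_prop) measurableSet_Icc
        (C := D * Real.exp (lam * T)) fun s hs => ?_
      rw [abs_of_nonneg (by positivity)]
      refine mul_le_mul_of_nonneg_left ?_ hD
      exact Real.exp_le_exp.2 (mul_le_mul_of_nonneg_left (hsub s hs).2 hlam)
    · exact fun s hs => hbd _ (hsub s hs)
  have step2 : ∫ s in Icc (0:ℝ) t, D * Real.exp (lam * (t - s)) ∂μ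
      = D * Real.exp (lam * t) * ∫ s in Icc (0:ℝ) t, Real.exp (-(lam * s)) ∂μ := by
    rw [← integral_const_mul]
    refine setIntegral_congr_fun measurableSet_Icc fun s _ => ?_
    rw [mul_assoc, ← Real.exp_add]
    ring_nf
  have step3 : ∫ s in Icc (0:ℝ) t, Real.exp (-(lam * s)) ∂μ
      ≤ ∫ s in Icc (0:ℝ) T, Real.exp (-(lam * s)) ∂μ := by
    refine setIntegral_mono_set ?_ ?_ ?_
    · exact integrableOn_of_bound μ (by fun_prop) measurableSet_Icc (C := 1) fun s hs => by
        rw [abs_of_nonneg (Real.exp_pos _).le]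
        exact Real.exp_le_one_iff.2 (by nlinarith [hs.1])
    · exact ae_of_all _ fun s => (Real.exp_pos _).le
    · exact HasSubset.Subset.eventuallyLE (Icc_subset_Icc_right htT)
  calc conv μ h t ≤ _ := step1
    _ = _ := step2
    _ ≤ _ := by
        have : (0:ℝ) ≤ D * Real.exp (lam * t) := by positivity
        exact mul_le_mul_of_nonneg_left step3 this

section Basics
variable {F : StieltjesFunction ℝ}

lemma F_nonneg (hF : IsNNDistFun F) (x : ℝ) : 0 ≤ F x := by
  rcases lt_or_ge x 0 with h | h
  · rw [hF.1 x h]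
  · rw [← hF.1 (-1) (by norm_num)]; exact F.mono (by linarith)

lemma F_le_one (hF : IsNNDistFun F) (x : ℝ) : F x ≤ 1 :=
  ge_of_tendsto hF.2 ((eventually_ge_atTop x).mono fun y hy => F.mono hy)

lemma F_leftLim_zero (hF : IsNNDistFun F) : leftLim (F : ℝ → ℝ) 0 = 0 := by
  refine leftLim_eq_of_tendsto ?_
  refine Tendsto.congr' ?_ tendsto_const_nhds
  filter_upwards [self_mem_nhdsWithin] with x (hx : x < 0)
  exact (hF.1 x hx).symm

lemma F_measure_Icc (hF : IsNNDistFun F) {t : ℝ} (ht : 0 ≤ t) :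
    F.measure (Icc 0 t) = ENNReal.ofReal (F t) := by
  rw [F.measure_Icc, F_leftLim_zero hF, sub_zero]

lemma F_finite (hF : IsNNDistFun F) : IsFiniteMeasure F.measure := by
  constructor
  have hbot : Tendsto (F : ℝ → ℝ) atBot (𝓝 0) := by
    refine Tendsto.congr' ?_ tendsto_const_nhds
    filter_upwards [eventually_lt_atBot (0:ℝ)] with x hx
    exact (hF.1 x hx).symm
  rw [F.measure_univ hbot hF.2]
  exact ENNReal.ofReal_lt_top

lemma F_measure_Icc_toReal (hF : IsNNDistFun F) {t : ℝ} (ht : 0 ≤ t) :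
    (F.measure (Icc 0 t)).toReal = F t := by
  rw [F_measure_Icc hF ht, ENNReal.toReal_ofReal (F_nonneg hF t)]

lemma exists_contraction (hF : IsNNDistFun F) (hF0 : F 0 < 1) {T : ℝ} (hT : 0 ≤ T) :
    ∃ lam : ℝ, 0 ≤ lam ∧ (∫ s in Icc (0:ℝ) T, Real.exp (-(lam * s)) ∂F.measure) < 1 := by
  haveI := F_finite hF
  set μ := F.measure
  have hlim : Tendsto (fun n : ℕ => ∫ s in Icc (0:ℝ) T, Real.exp (-((n:ℝ) * s)) ∂μ) atTop
      (𝓝 (∫ s in Icc (0:ℝ) T, (({0}: Set ℝ).indicator (fun _ => (1:ℝ))) s ∂μ)) := by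
    refine tendsto_integral_filter_of_dominated_convergence (fun _ => (1:ℝ))
      (Eventually.of_forall fun n => (by fun_prop : Measurable fun s : ℝ =>
        Real.exp (-((n:ℝ) * s))).aestronglyMeasurable) ?_ (integrable_const 1) ?_
    · refine Eventually.of_forall fun n => ?_
      refine (ae_restrict_iff' measurableSet_Icc).2 (ae_of_all _ fun s hs => ?_)
      rw [Real.norm_eq_abs, abs_of_nonneg (Real.exp_pos _).le]
      exact Real.exp_le_one_iff.2 (by nlinarith [hs.1])
    · refine (ae_restrict_iff' measurableSet_Icc).2 (ae_of_all _ fun s hs => ?_)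
      rcases eq_or_lt_of_le hs.1 with h0 | h0
      · simp only [← h0, mul_zero, neg_zero, Real.exp_zero]
        simp [Set.indicator_apply]
      · have : Tendsto (fun n : ℕ => -((n:ℝ) * s)) atTop atBot := by
          refine tendsto_neg_atBot_iff.2 ?_
          exact Tendsto.atTop_mul_const h0 tendsto_natCast_atTop_atTop
        have h2 := Real.tendsto_exp_atBot.comp this
        have hs0 : s ∉ ({0} : Set ℝ) := by simp [ne_of_gt h0]
        rw [Set.indicator_of_notMem hs0]
        exact h2
  have hval : ∫ s in Icc (0:ℝ) T, (({0}: Set ℝ).indicator (fun _ => (1:ℝ))) s ∂μ = F 0 := by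
    rw [integral_indicator (measurableSet_singleton 0)]
    rw [setIntegral_const, smul_eq_mul, mul_one, measureReal_def,
      Measure.restrict_apply (measurableSet_singleton 0)]
    have h1 : ({0} : Set ℝ) ∩ Icc 0 T = {0} := inter_eq_left.2 (by simp [hT])
    rw [h1]
    have h2 : μ {0} = ENNReal.ofReal (F 0) := by
      rw [StieltjesFunction.measure_singleton, F_leftLim_zero hF, sub_zero]
    rw [h2, ENNReal.toReal_ofReal (F_nonneg hF 0)]
  rw [hval] at hlim
  have : ∀ᶠ n : ℕ in atTop,
      (∫ s in Icc (0:ℝ) T, Real.exp (-((n:ℝ) * s)) ∂μ) < 1 :=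
    hlim.eventually_lt_const hF0
  obtain ⟨n, hn⟩ := this.exists
  exact ⟨n, Nat.cast_nonneg n, hn⟩

end Basics

lemma conv_eq_indicator (μ : Measure ℝ) (h : ℝ → ℝ) {u T : ℝ} (hu : u ≤ T) :
    conv μ h u = ∫ s in Icc (0:ℝ) T, ((Icc (0:ℝ) u).indicator (fun s => h (u - s))) s ∂μ := by
  rw [setIntegral_indicator measurableSet_Icc, Icc_inter_Icc, sup_idem, min_eq_right hu, conv]

lemma conv_rcll (μ : Measure ℝ) [IsFiniteMeasure μ] {h : ℝ → ℝ} (hmeas : Measurable h)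
    (hbd : ∀ T ≥ (0:ℝ), ∃ C, ∀ x ∈ Icc (0:ℝ) T, |h x| ≤ C)
    (hrc : ∀ t ≥ (0:ℝ), Tendsto h (𝓝[>] t) (𝓝 (h t)))
    (hll : ∀ t > (0:ℝ), ∃ L, Tendsto h (𝓝[<] t) (𝓝 L)) :
    RCLLOnNonneg (conv μ h) := by
  constructor
  · -- right continuity at t ≥ 0
    intro t ht
    set T : ℝ := t + 1 with hT
    obtain ⟨C, hC⟩ := hbd T (by linarith)
    have hC0 : 0 ≤ C := le_trans (abs_nonneg _) (hC 0 ⟨le_refl _, by linarith⟩)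
    have hmem : Ioc t T ∈ 𝓝[>] t := Ioc_mem_nhdsGT_of_mem ⟨le_refl t, by linarith⟩
    have key : Tendsto (fun u => ∫ s in Icc (0:ℝ) T,
        ((Icc (0:ℝ) u).indicator (fun s => h (u - s))) s ∂μ) (𝓝[>] t)
        (𝓝 (∫ s in Icc (0:ℝ) T, ((Icc (0:ℝ) t).indicator (fun s => h (t - s))) s ∂μ)) := by
      refine tendsto_integral_filter_of_dominated_convergence (fun _ => C) ?_ ?_
        (integrable_const C) ?_
      · refine Eventually.of_forall fun u => ?_
        exact ((hmeas.comp (measurable_const.sub measurable_id)).indicator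
          measurableSet_Icc).aestronglyMeasurable
      · filter_upwards [hmem] with u hu
        refine ae_of_all _ fun s => ?_
        by_cases hs : s ∈ Icc (0:ℝ) u
        · rw [Set.indicator_of_mem hs]
          exact hC _ ⟨by linarith [hs.1, hs.2], by linarith [hs.1, hu.2]⟩
        · rw [Set.indicator_of_notMem hs]; simpa using hC0
      · refine (ae_restrict_iff' measurableSet_Icc).2 (ae_of_all _ fun s hs => ?_)
        rcases le_or_gt s t with hst | hst
        · -- s ≤ t : indicator is eventually h (u - s), converges by right continuity
          have hev : ∀ᶠ u in 𝓝[>] t, ((Icc (0:ℝ) u).indicator (fun s => h (u - s))) s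
              = h (u - s) := by
            filter_upwards [self_mem_nhdsWithin] with u (hu : t < u)
            exact Set.indicator_of_mem (mem_Icc.mpr ⟨hs.1, by linarith⟩) _
          have h1 : Tendsto (fun u => u - s) (𝓝[>] t) (𝓝[>] (t - s)) := by
            refine tendsto_nhdsWithin_of_tendsto_nhds_of_eventually_within _
              ((continuous_id.sub continuous_const).continuousAt.tendsto.mono_left
                nhdsWithin_le_nhds) ?_
            filter_upwards [self_mem_nhdsWithin] with u (hu : t < u)
            exact sub_lt_sub_right hu s
          have h2 := (hrc (t - s) (by linarith [hs.1])).comp h1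
          rw [Set.indicator_of_mem (mem_Icc.mpr ⟨hs.1, hst⟩)]
          exact Tendsto.congr' (hev.mono fun u hu => hu.symm) h2
        · -- s > t : indicator is eventually 0
          have hev : ∀ᶠ u in 𝓝[>] t, ((Icc (0:ℝ) u).indicator (fun s => h (u - s))) s
              = 0 := by
            filter_upwards [Ioo_mem_nhdsGT_of_mem ⟨le_refl t, hst⟩] with u hu
            exact Set.indicator_of_notMem (fun hmem' => absurd hmem'.2 (not_le.2 hu.2)) _
          rw [Set.indicator_of_notMem (fun hmem' => absurd hmem'.2 (not_le.2 hst)) ]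
          exact Tendsto.congr' (hev.mono fun u hu => hu.symm) tendsto_const_nhds
    have heq : (fun u => conv μ h u) =ᶠ[𝓝[>] t] (fun u => ∫ s in Icc (0:ℝ) T,
        ((Icc (0:ℝ) u).indicator (fun s => h (u - s))) s ∂μ) := by
      filter_upwards [hmem] with u hu
      exact conv_eq_indicator μ h hu.2
    rw [show conv μ h t = ∫ s in Icc (0:ℝ) T,
      ((Icc (0:ℝ) t).indicator (fun s => h (t - s))) s ∂μ from
      conv_eq_indicator μ h (by linarith)]
    exact Tendsto.congr' heq.symm key
  · -- left limits at t > 0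
    intro t ht
    obtain ⟨C, hC⟩ := hbd t ht.le
    have hC0 : 0 ≤ C := le_trans (abs_nonneg _) (hC 0 ⟨le_refl _, ht.le⟩)
    refine ⟨∫ s in Icc (0:ℝ) t, ((Ico (0:ℝ) t).indicator (fun s => leftLim h (t - s))) s ∂μ, ?_⟩
    have key : Tendsto (fun u => ∫ s in Icc (0:ℝ) t,
        ((Icc (0:ℝ) u).indicator (fun s => h (u - s))) s ∂μ) (𝓝[<] t)
        (𝓝 (∫ s in Icc (0:ℝ) t, ((Ico (0:ℝ) t).indicator (fun s => leftLim h (t - s))) s ∂μ)) := by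
      refine tendsto_integral_filter_of_dominated_convergence (fun _ => C) ?_ ?_
        (integrable_const C) ?_
      · refine Eventually.of_forall fun u => ?_
        exact ((hmeas.comp (measurable_const.sub measurable_id)).indicator
          measurableSet_Icc).aestronglyMeasurable
      · filter_upwards [self_mem_nhdsWithin] with u (hu : u < t)
        refine ae_of_all _ fun s => ?_
        by_cases hs : s ∈ Icc (0:ℝ) u
        · rw [Set.indicator_of_mem hs]
          exact hC _ ⟨by linarith [hs.1, hs.2], by linarith [hs.1, hs.2]⟩
        · rw [Set.indicator_of_notMem hs]; simpa using hC0
      · refine (ae_restrict_iff' measurableSet_Icc).2 (ae_of_all _ fun s hs => ?_)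
        rcases lt_or_ge s t with hst | hst
        · -- s < t
          have hev : ∀ᶠ u in 𝓝[<] t, ((Icc (0:ℝ) u).indicator (fun s => h (u - s))) s
              = h (u - s) := by
            filter_upwards [Ioo_mem_nhdsLT_of_mem ⟨hst, le_refl t⟩] with u hu
            exact Set.indicator_of_mem (mem_Icc.mpr ⟨hs.1, hu.1.le⟩) _
          have h1 : Tendsto (fun u => u - s) (𝓝[<] t) (𝓝[<] (t - s)) := by
            refine tendsto_nhdsWithin_of_tendsto_nhds_of_eventually_within _
              ((continuous_id.sub continuous_const).continuousAt.tendsto.mono_left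
                nhdsWithin_le_nhds) ?_
            filter_upwards [self_mem_nhdsWithin] with u (hu : u < t)
            exact sub_lt_sub_right hu s
          obtain ⟨L, hL⟩ := hll (t - s) (by linarith)
          have hLL : leftLim h (t - s) = L :=
            leftLim_eq_of_tendsto hL
          have h2 := hL.comp h1
          rw [Set.indicator_of_mem (mem_Ico.mpr ⟨hs.1, hst⟩), hLL]
          exact Tendsto.congr' (hev.mono fun u hu => hu.symm) h2
        · -- s ≥ t, i.e. s = t since s ∈ Icc 0 t
          have hev : ∀ᶠ u in 𝓝[<] t, ((Icc (0:ℝ) u).indicator (fun s => h (u - s))) s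
              = 0 := by
            filter_upwards [self_mem_nhdsWithin] with u (hu : u < t)
            exact Set.indicator_of_notMem (fun hmem' => absurd hmem'.2 (not_le.2 (by linarith))) _
          rw [Set.indicator_of_notMem (fun hmem' => absurd hmem'.2 (not_lt.2 hst))]
          exact Tendsto.congr' (hev.mono fun u hu => hu.symm) tendsto_const_nhds
    have heq : (fun u => conv μ h u) =ᶠ[𝓝[<] t] (fun u => ∫ s in Icc (0:ℝ) t,
        ((Icc (0:ℝ) u).indicator (fun s => h (u - s))) s ∂μ) := by
      filter_upwards [self_mem_nhdsWithin] with u (hu : u < t)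
      exact conv_eq_indicator μ h hu.le
    exact Tendsto.congr' heq.symm key

noncomputable def Efun (e : ℝ → ℝ) : ℝ → ℝ := fun x => e (max x 0)
noncomputable def afun (F Ft : StieltjesFunction ℝ) (q₀ : ℝ) (e : ℝ → ℝ) : ℝ → ℝ := fun t =>
  q₀ - max (q₀ - 1) 0 * F t - min q₀ 1 * Ft t + Efun e t - conv F.measure (Efun e) t
noncomputable def PhiOp (F Ft : StieltjesFunction ℝ) (q₀ : ℝ) (e : ℝ → ℝ) (g : ℝ → ℝ) : ℝ → ℝ :=
  fun t => afun F Ft q₀ e t + conv F.measure (fun x => max (g x - 1) 0) t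

def GoodFun (g : ℝ → ℝ) : Prop :=
  Measurable g ∧ (∀ x, 0 ≤ g x) ∧ (∀ T ≥ (0:ℝ), ∃ C, ∀ x ∈ Icc (0:ℝ) T, g x ≤ C) ∧
    RCLLOnNonneg g

section E
variable {e : ℝ → ℝ} (heMono : MonotoneOn e (Set.Ici 0)) (heNonneg : ∀ t ≥ (0 : ℝ), 0 ≤ e t)
  (heRcll : RCLLOnNonneg e)

lemma Efun_mono (heMono : MonotoneOn e (Set.Ici 0)) : Monotone (Efun e) := fun x y hxy =>
  heMono (mem_Ici.2 (le_max_right _ _)) (mem_Ici.2 (le_max_right _ _)) (max_le_max hxy (le_refl 0))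

lemma Efun_nonneg (heNonneg : ∀ t ≥ (0 : ℝ), 0 ≤ e t) : ∀ x, 0 ≤ Efun e x :=
  fun x => heNonneg _ (le_max_right _ _)

lemma Efun_eq (e : ℝ → ℝ) {x : ℝ} (hx : 0 ≤ x) : Efun e x = e x := by
  rw [Efun, max_eq_left hx]

lemma Efun_rc (heRcll : RCLLOnNonneg e) : ∀ t ≥ (0:ℝ),
    Tendsto (Efun e) (𝓝[>] t) (𝓝 (Efun e t)) := by
  intro t ht
  rw [Efun_eq e ht]
  refine Tendsto.congr' ?_ (heRcll.1 t ht)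
  filter_upwards [self_mem_nhdsWithin] with x (hx : t < x)
  exact (Efun_eq e (le_trans ht hx.le)).symm

lemma Efun_ll (heRcll : RCLLOnNonneg e) : ∀ t > (0:ℝ),
    ∃ L, Tendsto (Efun e) (𝓝[<] t) (𝓝 L) := by
  intro t ht
  obtain ⟨L, hL⟩ := heRcll.2 t ht
  refine ⟨L, Tendsto.congr' ?_ hL⟩
  filter_upwards [Ioo_mem_nhdsLT_of_mem ⟨ht, le_refl t⟩] with x hx
  exact (Efun_eq e hx.1.le).symm

lemma Efun_bd (heMono : MonotoneOn e (Set.Ici 0)) (heNonneg : ∀ t ≥ (0 : ℝ), 0 ≤ e t) :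
    ∀ T ≥ (0:ℝ), ∀ x ∈ Icc (0:ℝ) T, |Efun e x| ≤ Efun e T := by
  intro T hT x hx
  rw [abs_of_nonneg (Efun_nonneg heNonneg x)]
  exact Efun_mono heMono hx.2
end E

section A
variable {F Ft : StieltjesFunction ℝ} {q₀ : ℝ} {e : ℝ → ℝ}

lemma max_min_sum : max (q₀ - 1) 0 + min q₀ 1 = q₀ := by
  rcases le_total q₀ 1 with h | h
  · rw [max_eq_right (by linarith), min_eq_left h]; ring
  · rw [max_eq_left (by linarith), min_eq_right h]; ring

lemma conv_nonneg_of_nonneg {μ : Measure ℝ} {h : ℝ → ℝ} (hh : ∀ x, 0 ≤ h x) (t : ℝ) :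
    0 ≤ conv μ h t :=
  setIntegral_nonneg measurableSet_Icc fun s _ => hh (t - s)

lemma conv_le_const {μ : Measure ℝ} [IsFiniteMeasure μ] {h : ℝ → ℝ} (hmeas : Measurable h)
    (h0 : ∀ x, 0 ≤ h x) {t C : ℝ} (hC : ∀ x ∈ Icc (0:ℝ) t, h x ≤ C) :
    conv μ h t ≤ C * (μ (Icc (0:ℝ) t)).toReal := by
  rcases lt_or_ge t 0 with ht | ht
  · rw [conv, Icc_eq_empty (not_le.2 ht)]
    simp
  · have hC0 : 0 ≤ C := le_trans (h0 0) (hC 0 ⟨le_refl _, ht⟩)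
    have : conv μ h t ≤ ∫ _ in Icc (0:ℝ) t, C ∂μ := by
      refine setIntegral_mono_on ?_ (integrableOn_const (measure_lt_top _ _).ne)
        measurableSet_Icc ?_
      · exact integrableOn_of_bound μ (hmeas.comp (measurable_const.sub measurable_id))
          measurableSet_Icc (C := C) fun s hs => by
            have h1 : 0 ≤ h (t - s) := h0 _
            have h2 : h (t - s) ≤ C := hC _ ⟨by linarith [hs.2], by linarith [hs.1]⟩
            have : |(fun s => h (t - s)) s| = h (t - s) := abs_of_nonneg h1
            calc |(h ∘ fun a => t - id a) s| = h (t - s) := by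
                  simp only [Function.comp, id]; exact abs_of_nonneg h1
              _ ≤ C := h2
      · exact fun s hs => hC _ ⟨by linarith [hs.2], by linarith [hs.1]⟩
    calc conv μ h t ≤ _ := this
      _ = C * (μ (Icc (0:ℝ) t)).toReal := by rw [setIntegral_const, smul_eq_mul, mul_comm, measureReal_def]

lemma afun_nonneg (hF : IsNNDistFun F) (hFt : IsNNDistFun Ft) (hq₀ : 0 ≤ q₀)
    (heMono : MonotoneOn e (Set.Ici 0)) (heNonneg : ∀ t ≥ (0 : ℝ), 0 ≤ e t) : ∀ x, 0 ≤ afun F Ft q₀ e x := by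
  intro x
  haveI := F_finite hF
  have h1 : max (q₀ - 1) 0 * F x ≤ max (q₀ - 1) 0 :=
    mul_le_of_le_one_right (le_max_right _ _) (F_le_one hF x)
  have h1' : min q₀ 1 * Ft x ≤ min q₀ 1 :=
    mul_le_of_le_one_right (le_min hq₀ zero_le_one) (F_le_one hFt x)
  have h2 : conv F.measure (Efun e) x ≤ Efun e x := by
    have := conv_le_const (μ := F.measure) (Efun_mono heMono).measurable
      (Efun_nonneg heNonneg) (C := Efun e x) (t := x)
      (fun y hy => Efun_mono heMono hy.2)
    refine this.trans ?_
    rcases lt_or_ge x 0 with hx | hx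
    · rw [Icc_eq_empty (not_le.2 hx)]
      simp [Efun_nonneg heNonneg x]
    · rw [F_measure_Icc_toReal hF hx]
      exact mul_le_of_le_one_right (Efun_nonneg heNonneg x) (F_le_one hF x)
  have := max_min_sum (q₀ := q₀)
  rw [afun]
  linarith
lemma afun_le (hF : IsNNDistFun F) (hFt : IsNNDistFun Ft) (hq₀ : 0 ≤ q₀)
    (heNonneg : ∀ t ≥ (0 : ℝ), 0 ≤ e t) : ∀ x, afun F Ft q₀ e x ≤ q₀ + Efun e x := by
  intro x
  have h1 : 0 ≤ max (q₀ - 1) 0 * F x := mul_nonneg (le_max_right _ _) (F_nonneg hF x)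
  have h2 : 0 ≤ min q₀ 1 * Ft x := mul_nonneg (le_min hq₀ zero_le_one) (F_nonneg hFt x)
  have h3 : 0 ≤ conv F.measure (Efun e) x := conv_nonneg_of_nonneg (Efun_nonneg heNonneg) x
  rw [afun]; linarith

lemma afun_measurable (hF : IsNNDistFun F) (heMono : MonotoneOn e (Set.Ici 0)) : Measurable (afun F Ft q₀ e) := by
  haveI := F_finite hF
  exact (((measurable_const.sub ((F.mono.measurable).const_mul _)).sub
    ((Ft.mono.measurable).const_mul _)).add (Efun_mono heMono).measurable).sub
    (conv_measurable _ (Efun_mono heMono).measurable)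

lemma stieltjes_rc (G : StieltjesFunction ℝ) (t : ℝ) : Tendsto G (𝓝[>] t) (𝓝 (G t)) :=
  (G.right_continuous t).tendsto.mono_left (nhdsWithin_mono _ Ioi_subset_Ici_self)

lemma afun_rcll (hF : IsNNDistFun F) (heMono : MonotoneOn e (Set.Ici 0))
    (heNonneg : ∀ t ≥ (0 : ℝ), 0 ≤ e t) (heRcll : RCLLOnNonneg e) : RCLLOnNonneg (afun F Ft q₀ e) := by
  haveI := F_finite hF
  have hconv := conv_rcll F.measure (Efun_mono heMono).measurable
    (fun T hT => ⟨Efun e T, Efun_bd heMono heNonneg T hT⟩) (Efun_rc heRcll) (Efun_ll heRcll)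
  constructor
  · intro t ht
    refine ((((tendsto_const_nhds.sub ((stieltjes_rc F t).const_mul _)).sub
      ((stieltjes_rc Ft t).const_mul _)).add (Efun_rc heRcll t ht)).sub (hconv.1 t ht))
  · intro t ht
    have hL1 := Monotone.tendsto_nhdsLT (fun _ _ h => F.mono h) t
    have hL2 := Monotone.tendsto_nhdsLT (fun _ _ h => Ft.mono h) t
    obtain ⟨L3, hL3⟩ := Efun_ll heRcll t ht
    obtain ⟨L4, hL4⟩ := hconv.2 t ht
    exact ⟨q₀ - max (q₀ - 1) 0 * sSup ((F : ℝ → ℝ) '' Iio t) - min q₀ 1 * sSup ((Ft : ℝ → ℝ) '' Iio t) + L3 - L4,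
      (((tendsto_const_nhds.sub (hL1.const_mul _)).sub (hL2.const_mul _)).add hL3).sub hL4⟩

lemma PhiOp_good (hF : IsNNDistFun F) (hFt : IsNNDistFun Ft) (hq₀ : 0 ≤ q₀)
    (heMono : MonotoneOn e (Set.Ici 0)) (heNonneg : ∀ t ≥ (0 : ℝ), 0 ≤ e t)
    (heRcll : RCLLOnNonneg e) {g : ℝ → ℝ} (hg : GoodFun g) : GoodFun (PhiOp F Ft q₀ e g) := by
  haveI := F_finite hF
  obtain ⟨hgm, hg0, hgb, hgr⟩ := hg
  have hmaxm : Measurable (fun x => max (g x - 1) 0) :=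
    (hgm.sub measurable_const).max measurable_const
  refine ⟨?_, ?_, ?_, ?_⟩
  · exact (afun_measurable hF heMono).add (conv_measurable _ hmaxm)
  · intro x
    exact add_nonneg (afun_nonneg hF hFt hq₀ heMono heNonneg x)
      (conv_nonneg_of_nonneg (fun y => le_max_right _ _) x)
  · intro T hT
    obtain ⟨Cg, hCg⟩ := hgb T hT
    refine ⟨q₀ + Efun e T + Cg, fun x hx => ?_⟩
    have h1 : afun F Ft q₀ e x ≤ q₀ + Efun e x := afun_le hF hFt hq₀ heNonneg x
    have h1' : Efun e x ≤ Efun e T := Efun_mono heMono hx.2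
    have hCg0 : 0 ≤ Cg := le_trans (hg0 0) (hCg 0 ⟨le_refl _, hT⟩)
    have h2 : conv F.measure (fun y => max (g y - 1) 0) x ≤ Cg := by
      have hb : ∀ y ∈ Icc (0:ℝ) x, max (g y - 1) 0 ≤ Cg := by
        intro y hy
        have := hCg y ⟨hy.1, hy.2.trans hx.2⟩
        exact max_le (by linarith) hCg0
      have := conv_le_const (μ := F.measure) hmaxm (fun y => le_max_right _ _)
        (C := Cg) (t := x) hb
      refine this.trans ?_
      rcases lt_or_ge x 0 with hx' | hx'
      · rw [Icc_eq_empty (not_le.2 hx')]; simp [hCg0]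
      · rw [F_measure_Icc_toReal hF hx']
        exact mul_le_of_le_one_right hCg0 (F_le_one hF x)
    simp only [PhiOp]; linarith
  · have hbd : ∀ T ≥ (0:ℝ), ∃ C, ∀ x ∈ Icc (0:ℝ) T, |max (g x - 1) 0| ≤ C := by
      intro T hT
      obtain ⟨Cg, hCg⟩ := hgb T hT
      have hCg0 : 0 ≤ Cg := le_trans (hg0 0) (hCg 0 ⟨le_refl _, hT⟩)
      exact ⟨Cg, fun x hx => by
        rw [abs_of_nonneg (le_max_right _ _)]
        exact max_le (by linarith [hCg x hx]) hCg0⟩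
    have hcont : Continuous (fun y : ℝ => max (y - 1) 0) :=
      (continuous_id.sub continuous_const).max continuous_const
    have hrc : ∀ t ≥ (0:ℝ), Tendsto (fun x => max (g x - 1) 0) (𝓝[>] t)
        (𝓝 (max (g t - 1) 0)) := fun t ht =>
      (hcont.continuousAt.tendsto).comp (hgr.1 t ht)
    have hll : ∀ t > (0:ℝ), ∃ L, Tendsto (fun x => max (g x - 1) 0) (𝓝[<] t) (𝓝 L) := by
      intro t ht
      obtain ⟨L, hL⟩ := hgr.2 t ht
      exact ⟨max (L - 1) 0, (hcont.continuousAt.tendsto).comp hL⟩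
    have := conv_rcll F.measure hmaxm hbd hrc hll
    constructor
    · intro t ht
      exact ((afun_rcll hF heMono heNonneg heRcll).1 t ht).add (this.1 t ht)
    · intro t ht
      obtain ⟨L1, hL1⟩ := (afun_rcll hF heMono heNonneg heRcll).2 t ht
      obtain ⟨L2, hL2⟩ := this.2 t ht
      exact ⟨L1 + L2, hL1.add hL2⟩

lemma max_sub_abs_le (a b : ℝ) : |max (a - 1) 0 - max (b - 1) 0| ≤ |a - b| := by
  have := abs_max_sub_max_le_abs (a - 1) (b - 1) 0
  simpa using this

lemma conv_diff_le {μ : Measure ℝ} [IsFiniteMeasure μ] {g₁ g₂ : ℝ → ℝ}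
    (h₁ : Measurable g₁) (h₂ : Measurable g₂) {T C₁ C₂ : ℝ}
    (hb₁ : ∀ x ∈ Icc (0:ℝ) T, |g₁ x| ≤ C₁) (hb₂ : ∀ x ∈ Icc (0:ℝ) T, |g₂ x| ≤ C₂)
    {t : ℝ} (ht : t ∈ Icc (0:ℝ) T) :
    |conv μ (fun x => max (g₁ x - 1) 0) t - conv μ (fun x => max (g₂ x - 1) 0) t|
      ≤ conv μ (fun x => |g₁ x - g₂ x|) t := by
  obtain ⟨ht0, htT⟩ := ht
  have hsub : ∀ s ∈ Icc (0:ℝ) t, t - s ∈ Icc (0:ℝ) T :=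
    fun s hs => ⟨by linarith [hs.2], by linarith [hs.1]⟩
  have hmb : ∀ (g : ℝ → ℝ) (C : ℝ), Measurable g → (∀ x ∈ Icc (0:ℝ) T, |g x| ≤ C) →
      IntegrableOn (fun s => max (g (t - s) - 1) 0) (Icc (0:ℝ) t) μ := by
    intro g C hgm hC
    refine integrableOn_of_bound μ (((hgm.comp (measurable_const.sub measurable_id)).sub
      measurable_const).max measurable_const) measurableSet_Icc (C := C + 1)
      fun s hs => ?_
    have h3 := hC _ (hsub s hs)
    have hC0 : 0 ≤ C := le_trans (abs_nonneg _) h3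
    have h4 : g (t - s) ≤ C := (le_abs_self _).trans h3
    have h5 : |max (g (t - s) - 1) 0| ≤ C + 1 := by
      rw [abs_of_nonneg (le_max_right _ _)]
      exact max_le (by linarith) (by linarith)
    simpa [Function.comp] using h5
  have m₁ := hmb g₁ C₁ h₁ hb₁
  have m₂ := hmb g₂ C₂ h₂ hb₂
  have heq : conv μ (fun x => max (g₁ x - 1) 0) t - conv μ (fun x => max (g₂ x - 1) 0) t
      = ∫ s in Icc (0:ℝ) t, (max (g₁ (t - s) - 1) 0 - max (g₂ (t - s) - 1) 0) ∂μ :=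
    (integral_sub m₁ m₂).symm
  rw [heq, ← Real.norm_eq_abs]
  refine le_trans (norm_integral_le_integral_norm _) ?_
  simp only [Real.norm_eq_abs]
  refine setIntegral_mono_on ((m₁.sub m₂).abs) ?_ measurableSet_Icc ?_
  · refine integrableOn_of_bound μ (((h₁.sub h₂).abs).comp
      (measurable_const.sub measurable_id)) measurableSet_Icc (C := C₁ + C₂) fun s hs => ?_
    have i1 := hb₁ _ (hsub s hs); have i2 := hb₂ _ (hsub s hs)
    have : |(fun x => |g₁ x - g₂ x|) (t - s)| = |g₁ (t - s) - g₂ (t - s)| := abs_abs _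
    calc |(|g₁ ∘ (fun a => t - id a) - g₂ ∘ (fun a => t - id a)|) s|
        = |g₁ (t - s) - g₂ (t - s)| := by simp [Function.comp, abs_abs]
      _ ≤ |g₁ (t - s)| + |g₂ (t - s)| := abs_sub _ _
      _ ≤ C₁ + C₂ := add_le_add i1 i2
  · exact fun s _ => max_sub_abs_le _ _

lemma rcll_of_unif {q : ℝ → ℝ} {qs : ℕ → ℝ → ℝ}
    (hqs : ∀ n, RCLLOnNonneg (qs n))
    (hunif : ∀ T ≥ (0:ℝ), ∃ r : ℕ → ℝ, Antitone r ∧ Tendsto r atTop (𝓝 0) ∧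
      ∀ n, ∀ x ∈ Icc (0:ℝ) T, |q x - qs n x| ≤ r n) :
    RCLLOnNonneg q := by
  constructor
  · intro t ht
    obtain ⟨r, hra, hr0, hr⟩ := hunif (t + 1) (by linarith)
    rw [Metric.tendsto_nhdsWithin_nhds]
    intro ε hε
    obtain ⟨n, hn⟩ := (hr0.eventually (eventually_lt_nhds (show (0:ℝ) < ε/3 by linarith))).exists
    have h1 := (hqs n).1 t ht
    rw [Metric.tendsto_nhdsWithin_nhds] at h1
    obtain ⟨δ, hδ, hδ'⟩ := h1 (ε/3) (by linarith)
    refine ⟨min δ 1, by positivity, fun {x} hx hdist => ?_⟩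
    have hxt : t < x := hx
    have hd : dist x t < δ := lt_of_lt_of_le hdist (min_le_left _ _)
    have hx1 : x ≤ t + 1 := by
      have : dist x t < 1 := lt_of_lt_of_le hdist (min_le_right _ _)
      rw [Real.dist_eq, abs_lt] at this
      linarith [this.1, this.2]
    have hxm : x ∈ Icc (0:ℝ) (t+1) := ⟨by linarith, hx1⟩
    have htm : t ∈ Icc (0:ℝ) (t+1) := ⟨ht, by linarith⟩
    have e1 : |q x - qs n x| ≤ r n := hr n x hxm
    have e2 : dist (qs n x) (qs n t) < ε/3 := hδ' hxt hd
    have e3 : |q t - qs n t| ≤ r n := hr n t htm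
    rw [Real.dist_eq] at e2 ⊢
    have habs : |q x - q t| ≤ |q x - qs n x| + |qs n x - qs n t| + |qs n t - q t| := by
      linarith [abs_sub_le (q x) (qs n x) (q t), abs_sub_le (qs n x) (qs n t) (q t)]
    rw [abs_sub_comm (qs n t) (q t)] at habs
    linarith
  · intro t ht
    obtain ⟨r, hra, hr0, hr⟩ := hunif (t + 1) (by linarith)
    have hrnn : ∀ n, 0 ≤ r n := by
      intro n
      exact le_trans (abs_nonneg _) (hr n t ⟨ht.le, by linarith⟩)
    -- left limits of qs n
    have hL : ∀ n, ∃ L, Tendsto (qs n) (𝓝[<] t) (𝓝 L) := fun n => (hqs n).2 t ht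
    choose Ls hLs using hL
    have hIoo : Ioo 0 t ∈ 𝓝[<] t := Ioo_mem_nhdsLT_of_mem ⟨ht, le_refl t⟩
    have hcauchy : CauchySeq Ls := by
      refine cauchySeq_of_le_tendsto_0 (fun N => 2 * r N) (fun n m N hn hm => ?_) ?_
      · have htd : Tendsto (fun x => dist (qs n x) (qs m x)) (𝓝[<] t)
            (𝓝 (dist (Ls n) (Ls m))) := (hLs n).dist (hLs m)
        refine le_of_tendsto htd ?_
        filter_upwards [hIoo] with x hx
        have hxm : x ∈ Icc (0:ℝ) (t+1) := ⟨hx.1.le, by linarith [hx.2]⟩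
        have e1 := hr n x hxm
        have e2 := hr m x hxm
        rw [Real.dist_eq]
        have : |qs n x - qs m x| ≤ |qs n x - q x| + |q x - qs m x| := abs_sub_le _ _ _
        rw [abs_sub_comm (qs n x) (q x)] at this
        have b1 : r n ≤ r N := hra hn
        have b2 : r m ≤ r N := hra hm
        linarith
      · have : Tendsto (fun N => 2 * r N) atTop (𝓝 (2 * 0)) := hr0.const_mul 2
        simpa using this
    obtain ⟨L, hLlim⟩ := cauchySeq_tendsto_of_complete hcauchy
    refine ⟨L, ?_⟩
    rw [Metric.tendsto_nhdsWithin_nhds]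
    intro ε hε
    have h1 : ∀ᶠ n in atTop, r n < ε/3 :=
      hr0.eventually (eventually_lt_nhds (show (0:ℝ) < ε/3 by linarith))
    have h2 : ∀ᶠ n in atTop, dist (Ls n) L < ε/3 := Metric.tendsto_nhds.1 hLlim (ε/3) (by linarith)
    obtain ⟨n, hn1, hn2⟩ := (h1.and h2).exists
    have h3 := hLs n
    rw [Metric.tendsto_nhdsWithin_nhds] at h3
    obtain ⟨δ, hδ, hδ'⟩ := h3 (ε/3) (by linarith)
    refine ⟨min δ t, by positivity, fun {x} hx hdist => ?_⟩
    have hxt : x < t := hx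
    have hd : dist x t < δ := lt_of_lt_of_le hdist (min_le_left _ _)
    have hx0 : 0 < x := by
      have : dist x t < t := lt_of_lt_of_le hdist (min_le_right _ _)
      rw [Real.dist_eq, abs_lt] at this
      linarith [this.1]
    have hxm : x ∈ Icc (0:ℝ) (t+1) := ⟨hx0.le, by linarith⟩
    have e1 : |q x - qs n x| ≤ r n := hr n x hxm
    have e2 : dist (qs n x) (Ls n) < ε/3 := hδ' hxt hd
    rw [Real.dist_eq] at e2 hn2 ⊢
    have : |q x - L| ≤ |q x - qs n x| + |qs n x - Ls n| + |Ls n - L| := by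
      linarith [abs_sub_le (q x) (qs n x) L, abs_sub_le (qs n x) (Ls n) L]
    linarith

/-- Existence, uniqueness, regularity and nonnegativity of the fluid limit `q`
(equation (2.3) and Lemma B.1). -/
theorem fluidEquation_existsUnique
    (F Ft : StieltjesFunction ℝ) (hF : IsNNDistFun F) (hFt : IsNNDistFun Ft)
    (hF0 : F 0 < 1)
    (q₀ : ℝ) (hq₀ : 0 ≤ q₀)
    (e : ℝ → ℝ) (heMono : MonotoneOn e (Set.Ici 0))
    (heNonneg : ∀ t ≥ (0 : ℝ), 0 ≤ e t) (heRcll : RCLLOnNonneg e) :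
    (∃ q : ℝ → ℝ, LocBddBorel q ∧ SolvesFluid F Ft q₀ e q ∧
      RCLLOnNonneg q ∧ ∀ t ≥ (0 : ℝ), 0 ≤ q t) ∧
    ∀ q₁ q₂ : ℝ → ℝ, LocBddBorel q₁ → SolvesFluid F Ft q₀ e q₁ →
      LocBddBorel q₂ → SolvesFluid F Ft q₀ e q₂ →
      ∀ t ≥ (0 : ℝ), q₁ t = q₂ t := by
  classical
  haveI hfin : IsFiniteMeasure F.measure := F_finite hF
  set μ := F.measure with hμ
  constructor
  · -- EXISTENCE
    set Φ : (ℝ → ℝ) → (ℝ → ℝ) := PhiOp F Ft q₀ e with hΦ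
    set qs : ℕ → ℝ → ℝ := fun n => Φ^[n] (fun _ => 0) with hqsdef
    have hqs_succ : ∀ n, qs (n+1) = Φ (qs n) := fun n => Function.iterate_succ_apply' Φ n _
    have hgood : ∀ n, GoodFun (qs n) := by
      intro n
      induction n with
      | zero =>
        exact ⟨measurable_const, fun x => le_refl 0, fun T hT => ⟨0, fun x hx => le_refl 0⟩,
          ⟨fun t ht => tendsto_const_nhds, fun t ht => ⟨0, tendsto_const_nhds⟩⟩⟩
      | succ n ih =>
        rw [hqs_succ]
        exact PhiOp_good hF hFt hq₀ heMono heNonneg heRcll ih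
    -- key uniform Cauchy estimate
    have key : ∀ T ≥ (0:ℝ), ∃ r : ℕ → ℝ, (∀ n, 0 ≤ r n) ∧ Antitone r ∧
        Tendsto r atTop (𝓝 0) ∧
        ∀ n m, n ≤ m → ∀ x ∈ Icc (0:ℝ) T, |qs m x - qs n x| ≤ r n := by
      intro T hT
      obtain ⟨lam, hlam, hk1⟩ := exists_contraction hF hF0 hT
      set k : ℝ := ∫ s in Icc (0:ℝ) T, Real.exp (-(lam * s)) ∂μ with hkdef
      have hk0 : 0 ≤ k := setIntegral_nonneg measurableSet_Icc fun s _ => (Real.exp_pos _).le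
      have h1k : 0 < 1 - k := by linarith
      set Ca : ℝ := q₀ + Efun e T with hCadef
      have hCa0 : 0 ≤ Ca := add_nonneg hq₀ (Efun_nonneg heNonneg T)
      have habs : ∀ n T' (hT' : (0:ℝ) ≤ T'), ∃ C ≥ 0, ∀ x ∈ Icc (0:ℝ) T', |qs n x| ≤ C := by
        intro n T' hT'
        obtain ⟨C, hC⟩ := (hgood n).2.2.1 T' hT'
        refine ⟨C, le_trans ((hgood n).2.1 0) (hC 0 ⟨le_refl _, hT'⟩), fun x hx => ?_⟩
        rw [abs_of_nonneg ((hgood n).2.1 x)]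
        exact hC x hx
      have hgap : ∀ n, ∀ x ∈ Icc (0:ℝ) T, |qs (n+1) x - qs n x|
          ≤ Ca * k^n * Real.exp (lam * x) := by
        intro n
        induction n with
        | zero =>
          intro x hx
          have h0 : qs 0 x = 0 := rfl
          have h1 : qs 1 x = afun F Ft q₀ e x := by
            rw [hqs_succ 0]
            have : conv μ (fun y => max (qs 0 y - 1) 0) x = 0 := by
              have : (fun y => max (qs 0 y - 1) 0) = fun _ => (0:ℝ) := by
                funext y; show max ((0:ℝ) - 1) 0 = 0; simp
              rw [this, conv]; simp
            simp only [hΦ, PhiOp, hμ] at this ⊢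
            rw [this, add_zero]
          rw [h0, h1, sub_zero, abs_of_nonneg (afun_nonneg hF hFt hq₀ heMono heNonneg x)]
          have := afun_le hF hFt hq₀ heNonneg x
          have h2 : Efun e x ≤ Efun e T := Efun_mono heMono hx.2
          have h3 : (1:ℝ) ≤ Real.exp (lam * x) :=
            Real.one_le_exp (mul_nonneg hlam hx.1)
          have h4 : Ca ≤ Ca * Real.exp (lam * x) := le_mul_of_one_le_right hCa0 h3
          simp only [pow_zero, mul_one]
          calc afun F Ft q₀ e x ≤ q₀ + Efun e x := this
            _ ≤ Ca := by rw [hCadef]; linarith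
            _ ≤ Ca * Real.exp (lam * x) := h4
        | succ n ih =>
          intro x hx
          have hg1 : GoodFun (Φ (qs n)) := by rw [← hqs_succ n]; exact hgood (n+1)
          obtain ⟨C1, hC10, hC1⟩ := habs (n+1) T hT
          obtain ⟨C2, hC20, hC2⟩ := habs n T hT
          rw [hqs_succ n] at hC1 ih
          rw [hqs_succ (n+1), hqs_succ n]
          have hdiff : |Φ (Φ (qs n)) x - Φ (qs n) x|
              ≤ conv μ (fun y => |Φ (qs n) y - qs n y|) x := by
            have hcancel : Φ (Φ (qs n)) x - Φ (qs n) x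
                = conv μ (fun y => max (Φ (qs n) y - 1) 0) x
                  - conv μ (fun y => max (qs n y - 1) 0) x := by
              simp only [hΦ, PhiOp, hμ]; ring
            rw [hcancel]
            exact conv_diff_le hg1.1 (hgood n).1 hC1 hC2 hx
          refine hdiff.trans ?_
          have hcl := conv_le (μ := μ)
            ((hg1.1.sub (hgood n).1).abs) hx
            (mul_nonneg hCa0 (pow_nonneg hk0 n)) hlam
            (fun y _ => abs_nonneg _) ih
          rw [← hkdef] at hcl
          calc conv μ (fun y => |Φ (qs n) y - qs n y|) x
              ≤ Ca * k ^ n * Real.exp (lam * x) * k := hcl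
            _ = Ca * k ^ (n+1) * Real.exp (lam * x) := by ring
      -- telescoping
      have hcau : ∀ n m, n ≤ m → ∀ x ∈ Icc (0:ℝ) T, |qs m x - qs n x|
          ≤ Ca * ((k^n - k^m)/(1-k)) * Real.exp (lam * x) := by
        intro n m hnm
        induction m, hnm using Nat.le_induction with
        | base => intro x hx; simp
        | succ m hnm ih =>
          intro x hx
          have h1 := hgap m x hx
          have h2 := ih x hx
          have h3 : |qs (m+1) x - qs n x| ≤ |qs (m+1) x - qs m x| + |qs m x - qs n x| := by
            have := abs_sub_le (qs (m+1) x) (qs m x) (qs n x)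
            linarith
          have halg : Ca * k ^ m * Real.exp (lam * x)
              + Ca * ((k^n - k^m)/(1-k)) * Real.exp (lam * x)
              = Ca * ((k^n - k^(m+1))/(1-k)) * Real.exp (lam * x) := by
            field_simp
            ring
          calc |qs (m+1) x - qs n x| ≤ |qs (m+1) x - qs m x| + |qs m x - qs n x| := h3
            _ ≤ Ca * k ^ m * Real.exp (lam * x)
                + Ca * ((k^n - k^m)/(1-k)) * Real.exp (lam * x) := add_le_add h1 h2
            _ = Ca * ((k^n - k^(m+1))/(1-k)) * Real.exp (lam * x) := halg
      refine ⟨fun n => (Ca * Real.exp (lam * T) / (1 - k)) * k ^ n, ?_, ?_, ?_, ?_⟩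
      · intro n
        have : (0:ℝ) ≤ Ca * Real.exp (lam * T) / (1 - k) := by positivity
        exact mul_nonneg this (pow_nonneg hk0 n)
      · intro n m hnm
        have : (0:ℝ) ≤ Ca * Real.exp (lam * T) / (1 - k) := by positivity
        exact mul_le_mul_of_nonneg_left (pow_le_pow_of_le_one hk0 (by linarith) hnm) this
      · have := (tendsto_pow_atTop_nhds_zero_of_lt_one hk0 (by linarith)).const_mul
          (Ca * Real.exp (lam * T) / (1 - k))
        simpa using this
      · intro n m hnm x hx
        refine (hcau n m hnm x hx).trans ?_
        have h1 : k ^ n - k ^ m ≤ k ^ n := by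
          have := pow_nonneg hk0 m; linarith
        have h2 : Real.exp (lam * x) ≤ Real.exp (lam * T) :=
          Real.exp_le_exp.2 (mul_le_mul_of_nonneg_left hx.2 hlam)
        calc Ca * ((k^n - k^m)/(1-k)) * Real.exp (lam * x)
            ≤ Ca * (k^n/(1-k)) * Real.exp (lam * T) := by
              gcongr
          _ = (Ca * Real.exp (lam * T) / (1 - k)) * k ^ n := by ring
    -- pointwise Cauchy and limit
    have hcauchy : ∀ x, CauchySeq (fun n => qs n x) := by
      intro x
      rcases lt_or_ge x 0 with hx | hx
      · have hconst : ∀ n, qs (n+1) x = afun F Ft q₀ e x + conv μ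
            (fun y => max (qs n y - 1) 0) x := fun n => by rw [hqs_succ n]; rfl
        have hzero : ∀ (g : ℝ → ℝ), conv μ g x = 0 := by
          intro g
          rw [conv, Icc_eq_empty (not_le.2 hx)]
          simp
        have : Tendsto (fun n => qs n x) atTop (𝓝 (afun F Ft q₀ e x)) := by
          refine Tendsto.congr' ?_ tendsto_const_nhds
          filter_upwards [eventually_ge_atTop 1] with n hn
          obtain ⟨m, rfl⟩ := Nat.exists_eq_add_of_le hn
          rw [add_comm 1 m, hconst m, hzero, add_zero]
        exact this.cauchySeq
      · obtain ⟨r, hr0, hra, hrt, hr⟩ := key x hx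
        refine cauchySeq_of_le_tendsto_0 r (fun n m N hn hm => ?_) hrt
        have hxm : x ∈ Icc (0:ℝ) x := ⟨hx, le_refl x⟩
        rcases le_total n m with h | h
        · rw [Real.dist_eq, abs_sub_comm]
          exact (hr n m h x hxm).trans (hra hn)
        · rw [Real.dist_eq]
          exact (hr m n h x hxm).trans (hra hm)
    set q : ℝ → ℝ := fun x => limUnder atTop (fun n => qs n x) with hqdef
    have htend : ∀ x, Tendsto (fun n => qs n x) atTop (𝓝 (q x)) :=
      fun x => (hcauchy x).tendsto_limUnder
    have hunif : ∀ T ≥ (0:ℝ), ∃ r : ℕ → ℝ, (∀ n, 0 ≤ r n) ∧ Antitone r ∧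
        Tendsto r atTop (𝓝 0) ∧ ∀ n, ∀ x ∈ Icc (0:ℝ) T, |q x - qs n x| ≤ r n := by
      intro T hT
      obtain ⟨r, hr0, hra, hrt, hr⟩ := key T hT
      refine ⟨r, hr0, hra, hrt, fun n x hx => ?_⟩
      have h1 : Tendsto (fun m => |qs m x - qs n x|) atTop (𝓝 (|q x - qs n x|)) :=
        ((htend x).sub tendsto_const_nhds).abs
      exact le_of_tendsto h1 ((eventually_ge_atTop n).mono fun m hm => hr n m hm x hx)
    have hqmeas : Measurable q :=
      measurable_of_tendsto_metrizable (fun n => (hgood n).1) (tendsto_pi_nhds.2 htend)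
    have hqnonneg : ∀ x, 0 ≤ q x :=
      fun x => ge_of_tendsto (htend x) (Eventually.of_forall fun n => (hgood n).2.1 x)
    refine ⟨q, ⟨hqmeas.comp measurable_subtype_coe, ?_⟩, ?_, ?_, fun t ht => hqnonneg t⟩
    · -- local boundedness
      intro T hT
      obtain ⟨r, hr0, hra, hrt, hr⟩ := hunif T hT.le
      refine ⟨r 0, fun x hx => ?_⟩
      have h0 := hr 0 x hx
      have : qs 0 x = 0 := rfl
      rw [this, sub_zero] at h0
      exact h0
    · -- solves the fluid equation
      intro t ht
      obtain ⟨r, hr0, hra, hrt, hr⟩ := hunif t ht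
      have hqb : ∀ x ∈ Icc (0:ℝ) t, |q x| ≤ r 0 := by
        intro x hx
        have h0 := hr 0 x hx
        have hz : qs 0 x = 0 := rfl
        rw [hz, sub_zero] at h0
        exact h0
      have hfix : q t = afun F Ft q₀ e t + conv μ (fun x => max (q x - 1) 0) t := by
        have h1 : Tendsto (fun n => qs (n+1) t) atTop (𝓝 (q t)) :=
          (htend t).comp (tendsto_add_atTop_nat 1)
        have hconv : Tendsto (fun n => conv μ (fun x => max (qs n x - 1) 0) t) atTop
            (𝓝 (conv μ (fun x => max (q x - 1) 0) t)) := by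
          rw [tendsto_iff_dist_tendsto_zero]
          refine squeeze_zero (fun n => dist_nonneg) (fun n => ?_)
            (by simpa using hrt.mul_const ((μ (Icc (0:ℝ) t)).toReal))
          rw [Real.dist_eq]
          obtain ⟨Cn, hCn⟩ := (hgood n).2.2.1 t ht
          have hCnabs : ∀ x ∈ Icc (0:ℝ) t, |qs n x| ≤ Cn := fun x hx => by
            rw [abs_of_nonneg ((hgood n).2.1 x)]; exact hCn x hx
          have hd := conv_diff_le (μ := μ) (hgood n).1 hqmeas hCnabs hqb
            (t := t) ⟨ht, le_refl t⟩
          refine hd.trans ?_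
          refine conv_le_const (((hgood n).1.sub hqmeas).abs) (fun x => abs_nonneg _)
            (fun x hx => ?_)
          rw [Pi.sub_apply, abs_sub_comm]
          exact hr n x hx
        have h2 : Tendsto (fun n => qs (n+1) t) atTop
            (𝓝 (afun F Ft q₀ e t + conv μ (fun x => max (q x - 1) 0) t)) := by
          have : (fun n => qs (n+1) t) = fun n => afun F Ft q₀ e t
              + conv μ (fun x => max (qs n x - 1) 0) t := by
            funext n; rw [hqs_succ n]; rfl
          rw [this]
          exact tendsto_const_nhds.add hconv
        exact tendsto_nhds_unique h1 h2
      rw [hfix]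
      have he1 : Efun e t = e t := Efun_eq e ht
      have he2 : conv μ (Efun e) t = ∫ s in Icc (0:ℝ) t, e (t - s) ∂F.measure :=
        setIntegral_congr_fun measurableSet_Icc fun s hs => Efun_eq e (by linarith [hs.2])
      have he3 : conv μ (fun x => max (q x - 1) 0) t
          = ∫ s in Icc (0:ℝ) t, max (q (t - s) - 1) 0 ∂F.measure := rfl
      simp only [afun, he1, he2, he3]
      rw [show conv F.measure (Efun e) t = _ from he2]
    · -- RCLL
      refine rcll_of_unif (fun n => (hgood n).2.2.2) (fun T hT => ?_)
      obtain ⟨r, hr0, hra, hrt, hr⟩ := hunif T hT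
      exact ⟨r, hra, hrt, hr⟩
  · -- UNIQUENESS
    intro q₁ q₂ hb₁ hs₁ hb₂ hs₂ t₀ ht₀
    obtain ⟨lam, hlam, hk1⟩ := exists_contraction hF hF0 ht₀
    set k : ℝ := ∫ s in Icc (0:ℝ) t₀, Real.exp (-(lam * s)) ∂μ with hkdef
    have hk0 : 0 ≤ k := setIntegral_nonneg measurableSet_Icc fun s _ => (Real.exp_pos _).le
    set Q₁ : ℝ → ℝ := fun x => q₁ (max x 0) with hQ₁
    set Q₂ : ℝ → ℝ := fun x => q₂ (max x 0) with hQ₂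
    have hsubm : Measurable (fun x : ℝ => (⟨max x 0, le_max_right x 0⟩ : Set.Ici (0:ℝ))) :=
      Measurable.subtype_mk (measurable_id.max measurable_const)
    have hQ₁m : Measurable Q₁ := hb₁.1.comp hsubm
    have hQ₂m : Measurable Q₂ := hb₂.1.comp hsubm
    obtain ⟨C₁, hC₁⟩ := hb₁.2 (t₀ + 1) (by linarith)
    obtain ⟨C₂, hC₂⟩ := hb₂.2 (t₀ + 1) (by linarith)
    have hQ₁b : ∀ x ∈ Icc (0:ℝ) t₀, |Q₁ x| ≤ C₁ := by
      intro x hx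
      have : Q₁ x = q₁ x := by rw [hQ₁]; simp [max_eq_left hx.1]
      rw [this]
      exact hC₁ x ⟨hx.1, by linarith [hx.2]⟩
    have hQ₂b : ∀ x ∈ Icc (0:ℝ) t₀, |Q₂ x| ≤ C₂ := by
      intro x hx
      have : Q₂ x = q₂ x := by rw [hQ₂]; simp [max_eq_left hx.1]
      rw [this]
      exact hC₂ x ⟨hx.1, by linarith [hx.2]⟩
    have hC₁0 : 0 ≤ C₁ := le_trans (abs_nonneg _) (hC₁ 0 ⟨le_refl _, by linarith⟩)
    have hC₂0 : 0 ≤ C₂ := le_trans (abs_nonneg _) (hC₂ 0 ⟨le_refl _, by linarith⟩)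
    set d : ℝ → ℝ := fun x => |Q₁ x - Q₂ x| with hd
    have hdm : Measurable d := (hQ₁m.sub hQ₂m).abs
    have hdQ : ∀ x, 0 ≤ x → d x = |q₁ x - q₂ x| := by
      intro x hx
      rw [hd]
      simp only [hQ₁, hQ₂, max_eq_left hx]
    have hIeq : ∀ (qq QQ : ℝ → ℝ), (∀ y, 0 ≤ y → QQ y = qq y) → ∀ t, 0 ≤ t →
        (∫ s in Icc (0:ℝ) t, max (qq (t - s) - 1) 0 ∂F.measure)
          = conv μ (fun x => max (QQ x - 1) 0) t := by
      intro qq QQ hqQ t ht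
      refine (setIntegral_congr_fun measurableSet_Icc fun s hs => ?_).symm
      have : QQ (t - s) = qq (t - s) := hqQ _ (by linarith [hs.2])
      simp only [this]
    have hsubinv : ∀ t ∈ Icc (0:ℝ) t₀, d t ≤ conv μ d t := by
      intro t ht
      have h₁ := hs₁ t ht.1
      have h₂ := hs₂ t ht.1
      have hdiffeq : q₁ t - q₂ t = conv μ (fun x => max (Q₁ x - 1) 0) t
          - conv μ (fun x => max (Q₂ x - 1) 0) t := by
        rw [h₁, h₂, hIeq q₁ Q₁ (fun y hy => by rw [hQ₁]; simp [max_eq_left hy]) t ht.1,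
          hIeq q₂ Q₂ (fun y hy => by rw [hQ₂]; simp [max_eq_left hy]) t ht.1]
        ring
      rw [hdQ t ht.1, hdiffeq]
      have hQ₁b' : ∀ x ∈ Icc (0:ℝ) t₀, |Q₁ x| ≤ C₁ := hQ₁b
      exact conv_diff_le hQ₁m hQ₂m hQ₁b hQ₂b ht
    have hdb : ∀ x ∈ Icc (0:ℝ) t₀, d x ≤ C₁ + C₂ := by
      intro x hx
      rw [hd]
      calc |Q₁ x - Q₂ x| ≤ |Q₁ x| + |Q₂ x| := abs_sub _ _
        _ ≤ C₁ + C₂ := add_le_add (hQ₁b x hx) (hQ₂b x hx)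
    have hiter : ∀ n, ∀ x ∈ Icc (0:ℝ) t₀, d x ≤ (C₁ + C₂) * k^n * Real.exp (lam * x) := by
      intro n
      induction n with
      | zero =>
        intro x hx
        have h3 : (1:ℝ) ≤ Real.exp (lam * x) := Real.one_le_exp (mul_nonneg hlam hx.1)
        have := hdb x hx
        calc d x ≤ C₁ + C₂ := this
          _ = (C₁ + C₂) * 1 := by ring
          _ ≤ (C₁ + C₂) * Real.exp (lam * x) := by
              refine mul_le_mul_of_nonneg_left h3 (by linarith)
          _ = (C₁ + C₂) * k ^ 0 * Real.exp (lam * x) := by ring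
      | succ n ih =>
        intro x hx
        refine (hsubinv x hx).trans ?_
        have hcl := conv_le (μ := μ) hdm hx
          (mul_nonneg (by linarith) (pow_nonneg hk0 n)) hlam
          (fun y _ => abs_nonneg _) ih
        rw [← hkdef] at hcl
        calc conv μ d x ≤ (C₁ + C₂) * k ^ n * Real.exp (lam * x) * k := hcl
          _ = (C₁ + C₂) * k ^ (n+1) * Real.exp (lam * x) := by ring
    have hd0 : d t₀ ≤ 0 := by
      have htm : t₀ ∈ Icc (0:ℝ) t₀ := ⟨ht₀, le_refl _⟩
      have h1 : ∀ n, d t₀ ≤ ((C₁ + C₂) * Real.exp (lam * t₀)) * k ^ n := by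
        intro n
        have := hiter n t₀ htm
        calc d t₀ ≤ (C₁ + C₂) * k^n * Real.exp (lam * t₀) := this
          _ = ((C₁ + C₂) * Real.exp (lam * t₀)) * k ^ n := by ring
      have h2 : Tendsto (fun n : ℕ => ((C₁ + C₂) * Real.exp (lam * t₀)) * k ^ n) atTop
          (𝓝 0) := by
        have := (tendsto_pow_atTop_nhds_zero_of_lt_one hk0 hk1).const_mul
          ((C₁ + C₂) * Real.exp (lam * t₀))
        simpa using this
      exact ge_of_tendsto h2 (Eventually.of_forall h1)
    have habs0 : |q₁ t₀ - q₂ t₀| ≤ 0 := by rw [← hdQ t₀ ht₀]; exact hd0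
    have := abs_nonpos_iff.1 habs0
    exact sub_eq_zero.1 this
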